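/- Let g and h be finite-dimensional real Lie algebras and T : g → h a linear map, with dual map T* : h* → g*. Then T is a Lie algebra homomorphism (T[u,v] = [Tu,Tv] for all u,v ∈ g) if and only if T* is a Poisson map with respect to the Lie–Poisson brackets, i.e. for all smooth f, g : g* → ℝ and all η ∈ h*: {f,g}_{g*}(T*(η)) = {f ∘ T*, g ∘ T*}_{h*}(η). -/

import Mathlib

/-- The Lie–Poisson bracket on functions on the dual `g* = g →L[ℝ] ℝ` of a
finite-dimensional real Lie algebra `g` (with Lie bracket `brkt`):
`{f,g}(ξ) = ξ ⁅d_ξ f, d_ξ g⁆`. -/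
noncomputable def liePoissonBracket {L : Type*} [NormedAddCommGroup L] [NormedSpace ℝ L]
    (brkt : L →ₗ[ℝ] L →ₗ[ℝ] L)
    (d : ((L →L[ℝ] ℝ) → ℝ) → (L →L[ℝ] ℝ) → L)
    (f g : (L →L[ℝ] ℝ) → ℝ) : (L →L[ℝ] ℝ) → ℝ :=
  fun ξ => ξ (brkt (d f ξ) (d g ξ))

/-- A linear map `T : g → h` between finite-dimensional real Lie algebras is a Lie
algebra homomorphism if and only if its dual map `T* : h* → g*` is a Poisson map for
the Lie–Poisson brackets: for all smooth `f, g : g* → ℝ` and all `η ∈ h*`,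
`{f,g}_{g*}(T*(η)) = {f ∘ T*, g ∘ T*}_{h*}(η)`. -/
theorem lieHom_iff_dual_poissonMap {L M : Type*}
    [NormedAddCommGroup L] [NormedSpace ℝ L] [FiniteDimensional ℝ L]
    [NormedAddCommGroup M] [NormedSpace ℝ M] [FiniteDimensional ℝ M]
    -- the Lie algebra structure on `L`:
    (brL : L →ₗ[ℝ] L →ₗ[ℝ] L)
    (hbrL_alt : ∀ u : L, brL u u = 0)
    (hbrL_jacobi : ∀ u v w : L, brL u (brL v w) + brL w (brL u v) + brL v (brL w u) = 0)
    -- the Lie algebra structure on `M`: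
    (brM : M →ₗ[ℝ] M →ₗ[ℝ] M)
    (hbrM_alt : ∀ u : M, brM u u = 0)
    (hbrM_jacobi : ∀ u v w : M, brM u (brM v w) + brM w (brM u v) + brM v (brM w u) = 0)
    -- the identifications of Fréchet derivatives with Lie algebra elements via the
    -- canonical isomorphisms `g ≅ (g*)*` and `h ≅ (h*)*`:
    (dL : ((L →L[ℝ] ℝ) → ℝ) → (L →L[ℝ] ℝ) → L)
    (hdL : ∀ (f : (L →L[ℝ] ℝ) → ℝ) (ξ α : L →L[ℝ] ℝ), α (dL f ξ) = fderiv ℝ f ξ α)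
    (dM : ((M →L[ℝ] ℝ) → ℝ) → (M →L[ℝ] ℝ) → M)
    (hdM : ∀ (f : (M →L[ℝ] ℝ) → ℝ) (η α : M →L[ℝ] ℝ), α (dM f η) = fderiv ℝ f η α)
    -- a linear map `T : L → M`:
    (T : L →ₗ[ℝ] M) :
    (∀ u v : L, T (brL u v) = brM (T u) (T v))
      ↔ (∀ f g : (L →L[ℝ] ℝ) → ℝ, ContDiff ℝ (⊤ : ℕ∞) f → ContDiff ℝ (⊤ : ℕ∞) g →
          ∀ η : M →L[ℝ] ℝ,
            liePoissonBracket brL dL f g (η.comp (LinearMap.toContinuousLinearMap T))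
              = liePoissonBracket brM dM
                  (fun ζ => f (ζ.comp (LinearMap.toContinuousLinearMap T)))
                  (fun ζ => g (ζ.comp (LinearMap.toContinuousLinearMap T))) η) := by
  classical
  set Tc := LinearMap.toContinuousLinearMap T with hTc
  let S : (M →L[ℝ] ℝ) →L[ℝ] (L →L[ℝ] ℝ) := (ContinuousLinearMap.compL ℝ L M ℝ).flip Tc
  have hS : ∀ η : M →L[ℝ] ℝ, S η = η.comp Tc := fun _ => rfl
  have sep_L : ∀ x y : L, (∀ α : L →L[ℝ] ℝ, α x = α y) → x = y := fun x y h =>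
    (NormedSpace.eq_iff_forall_dual_eq ℝ).2 h
  have sep_M : ∀ x y : M, (∀ α : M →L[ℝ] ℝ, α x = α y) → x = y := fun x y h =>
    (NormedSpace.eq_iff_forall_dual_eq ℝ).2 h
  -- key: for differentiable f, dM (f ∘ T*) η = T (dL f (T* η))
  have key : ∀ (f : (L →L[ℝ] ℝ) → ℝ), ContDiff ℝ (⊤ : ℕ∞) f →
      ∀ η : M →L[ℝ] ℝ, dM (fun ζ => f (ζ.comp Tc)) η = T (dL f (η.comp Tc)) := by
    intro f hf η
    apply sep_M
    intro α
    have h1 : (fun ζ : M →L[ℝ] ℝ => f (ζ.comp Tc)) = f ∘ S := rfl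
    have h2 : fderiv ℝ (f ∘ S) η = (fderiv ℝ f (S η)).comp S := by
      rw [fderiv_comp η (hf.differentiable (by simp)).differentiableAt S.differentiableAt,
        S.fderiv]
    rw [hdM, h1, h2]
    have : (fderiv ℝ f (S η)).comp S α = fderiv ℝ f (η.comp Tc) (S α) := by
      rw [hS]; rfl
    rw [this, ← hdL]
    rfl
  constructor
  · intro hhom f g hf hg η
    simp only [liePoissonBracket, key f hf η, key g hg η, ← hhom]
    rfl
  · intro hP u v
    apply sep_M
    intro η
    -- evaluation functionals
    set f : (L →L[ℝ] ℝ) → ℝ := fun ξ => ξ u with hfd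
    set g : (L →L[ℝ] ℝ) → ℝ := fun ξ => ξ v with hgd
    have hfc : ContDiff ℝ (⊤ : ℕ∞) f := (ContinuousLinearMap.apply ℝ ℝ u).contDiff
    have hgc : ContDiff ℝ (⊤ : ℕ∞) g := (ContinuousLinearMap.apply ℝ ℝ v).contDiff
    have hdLf : ∀ ξ : L →L[ℝ] ℝ, dL f ξ = u := by
      intro ξ
      apply sep_L
      intro α
      rw [hdL]
      have : f = (ContinuousLinearMap.apply ℝ ℝ u : (L →L[ℝ] ℝ) →L[ℝ] ℝ) := rfl
      rw [this, ContinuousLinearMap.fderiv]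
      rfl
    have hdLg : ∀ ξ : L →L[ℝ] ℝ, dL g ξ = v := by
      intro ξ
      apply sep_L
      intro α
      rw [hdL]
      have : g = (ContinuousLinearMap.apply ℝ ℝ v : (L →L[ℝ] ℝ) →L[ℝ] ℝ) := rfl
      rw [this, ContinuousLinearMap.fderiv]
      rfl
    have hdMf : dM (fun ζ : M →L[ℝ] ℝ => f (ζ.comp Tc)) η = T u := by
      rw [key f hfc η, hdLf]
    have hdMg : dM (fun ζ : M →L[ℝ] ℝ => g (ζ.comp Tc)) η = T v := by
      rw [key g hgc η, hdLg]
    have := hP f g hfc hgc η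
    simp only [liePoissonBracket, hdLf, hdLg, hdMf, hdMg] at this
    exact this
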